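/- arXiv:2502.03073 — 2 statements merged into one kernel-verified Lean document; each statement's English description precedes it below -/
import Mathlib

section
/- Let N ≥ 2, 0 < k < N, and 1 ≤ j. The number of paths w : Fin N → Bool with w(0) = false, w(N−1) = true, exactly k visits to S1, and exactly j ascents equals C(k−1, j−1)·C(N−k−1, j−1). (Such a path consists of j maximal blocks of trues and j maximal blocks of falses; distributing k trues over j nonempty blocks and N−k falses over j nonempty blocks gives the two weak-composition counts.) -/
open Finset

/-- Transition probability of the two-state chain: `false` is S0, `true` is S1. -/
def mcStep (p00 p01 p10 p11 : ℝ) : Bool → Bool → ℝ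
  | false, false => p00
  | false, true  => p01
  | true,  false => p10
  | true,  true  => p11

/-- Weight of a path `w : Fin N → Bool`: product over `i = 0, …, N-2` of the
transition probability from `w i` to `w (i+1)`; equals `1` when `N = 1`. -/
def pathWeight (p00 p01 p10 p11 : ℝ) {N : ℕ} (w : Fin N → Bool) : ℝ :=
  ∏ i : Fin (N - 1),
    mcStep p00 p01 p10 p11
      (w ⟨i.val, by have := i.isLt; omega⟩)
      (w ⟨i.val + 1, by have := i.isLt; omega⟩)

/-- Number of visits to S1 (i.e. `true`) of a path. -/
def visitsS1 {N : ℕ} (w : Fin N → Bool) : ℕ :=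
  (Finset.univ.filter fun i : Fin N => w i = true).card

/-- Number of descents (indices `i ≤ N-2` with `w i = true` and `w (i+1) = false`). -/
def descents {N : ℕ} (w : Fin N → Bool) : ℕ :=
  (Finset.univ.filter fun i : Fin (N - 1) =>
    w ⟨i.val, by have := i.isLt; omega⟩ = true ∧
    w ⟨i.val + 1, by have := i.isLt; omega⟩ = false).card

/-- Number of ascents (indices `i ≤ N-2` with `w i = false` and `w (i+1) = true`). -/
def ascents {N : ℕ} (w : Fin N → Bool) : ℕ :=
  (Finset.univ.filter fun i : Fin (N - 1) =>
    w ⟨i.val, by have := i.isLt; omega⟩ = false ∧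
    w ⟨i.val + 1, by have := i.isLt; omega⟩ = true).card

set_option maxHeartbeats 1000000
lemma snoc_mk_lt {n : ℕ} (v : Fin (n+1) → Bool) (b : Bool) (i : ℕ) (h : i < n+1) (h2 : i < n+2) :
    (Fin.snoc v b : Fin (n+2) → Bool) ⟨i, h2⟩ = v ⟨i, h⟩ := by
  have : (⟨i, h2⟩ : Fin (n+2)) = Fin.castSucc ⟨i, h⟩ := rfl
  rw [this, Fin.snoc_castSucc]

lemma snoc_mk_last {n : ℕ} (v : Fin (n+1) → Bool) (b : Bool) (h2 : n+1 < n+2) :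
    (Fin.snoc v b : Fin (n+2) → Bool) ⟨n+1, h2⟩ = b := by
  have : (⟨n+1, h2⟩ : Fin (n+2)) = Fin.last (n+1) := rfl
  rw [this, Fin.snoc_last]

lemma ascents_snoc {n : ℕ} (v : Fin (n+1) → Bool) (b : Bool) :
    ascents (Fin.snoc v b : Fin (n+2) → Bool) =
      ascents v + (if v (Fin.last n) = false ∧ b = true then 1 else 0) := by
  have h1 : ascents (Fin.snoc v b : Fin (n+2) → Bool) =
      ∑ i : Fin (n+1), if ((Fin.snoc v b : Fin (n+2) → Bool) ⟨i.val, by omega⟩ = false ∧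
        (Fin.snoc v b : Fin (n+2) → Bool) ⟨i.val + 1, by omega⟩ = true) then 1 else 0 := by
    rw [ascents, Finset.card_filter]
    rfl
  have h2 : ascents v =
      ∑ i : Fin n, if (v ⟨i.val, by omega⟩ = false ∧ v ⟨i.val + 1, by omega⟩ = true) then 1 else 0 := by
    rw [ascents, Finset.card_filter]
    rfl
  have key : ∀ (i : ℕ) (h : i < n+1) (h' : i+1 < n+2),
      (Fin.snoc v b : Fin (n+2) → Bool) ⟨i, by omega⟩ =
        v ⟨i, h⟩ ∧
      ((∀ _hlt : i < n, (Fin.snoc v b : Fin (n+2) → Bool) ⟨i+1, h'⟩ = v ⟨i+1, by omega⟩) ∧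
       (i = n → (Fin.snoc v b : Fin (n+2) → Bool) ⟨i+1, h'⟩ = b)) := by
    intro i h h'
    refine ⟨snoc_mk_lt v b i h _, fun hlt => snoc_mk_lt v b (i+1) (by omega) _, fun he => ?_⟩
    subst he; exact snoc_mk_last v b _
  rw [h1, h2, Fin.sum_univ_castSucc]
  congr 1
  · apply Finset.sum_congr rfl
    intro i _
    have e1 := (key i.val (by omega) (by omega)).1
    have e2 := (key i.val (by omega) (by omega)).2.1 i.isLt
    simp only [Fin.coe_castSucc]
    simp only [e1, e2]
  · have e1 := (key n (by omega) (by omega)).1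
    have e2 := (key n (by omega) (by omega)).2.2 rfl
    simp only [Fin.val_last]
    simp only [e1, e2]
    rfl

lemma visits_snoc {n : ℕ} (v : Fin (n+1) → Bool) (b : Bool) :
    visitsS1 (Fin.snoc v b : Fin (n+2) → Bool) = visitsS1 v + b.toNat := by
  unfold visitsS1
  rw [Finset.card_filter, Finset.card_filter, Fin.sum_univ_castSucc]
  simp only [Fin.snoc_castSucc, Fin.snoc_last]
  cases b <;> simp

def cnt (n k j : ℕ) (e : Bool) : ℕ :=
  (Finset.univ.filter (fun w : Fin (n+1) → Bool =>
    w 0 = false ∧ w (Fin.last n) = e ∧ visitsS1 w = k ∧ ascents w = j)).card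

lemma card_filter_snoc (n : ℕ) (b : Bool) (P : (Fin (n+1) → Bool) → Prop) [DecidablePred P] :
    (Finset.univ.filter (fun w : Fin (n+2) → Bool =>
        w (Fin.last (n+1)) = b ∧ P (fun i => w (Fin.castSucc i)))).card
    = (Finset.univ.filter P).card := by
  apply Finset.card_bij' (fun w _ => fun i : Fin (n+1) => w (Fin.castSucc i))
    (fun v _ => (Fin.snoc v b : Fin (n+2) → Bool))
  · intro w hw
    simp only [Finset.mem_filter, Finset.mem_univ, true_and] at hw ⊢
    exact hw.2
  · intro v hv
    simp only [Finset.mem_filter, Finset.mem_univ, true_and] at hv ⊢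
    constructor
    · exact Fin.snoc_last _ _
    · have : (fun i : Fin (n+1) => (Fin.snoc v b : Fin (n+2) → Bool) (Fin.castSucc i)) = v := by
        funext i; exact Fin.snoc_castSucc ..
      rw [this]; exact hv
  · intro w hw
    simp only [Finset.mem_filter, Finset.mem_univ, true_and] at hw
    funext i
    induction i using Fin.lastCases with
    | last => rw [Fin.snoc_last, hw.1]
    | cast i' => rw [Fin.snoc_castSucc]
  · intro v hv
    funext i
    exact Fin.snoc_castSucc ..

lemma cnt_succ (n k j : ℕ) (e : Bool) :
    cnt (n+1) k j e = (Finset.univ.filter (fun v : Fin (n+1) → Bool =>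
      v 0 = false ∧ visitsS1 v + e.toNat = k ∧
      ascents v + (if v (Fin.last n) = false ∧ e = true then 1 else 0) = j)).card := by
  rw [cnt, ← card_filter_snoc n e (fun v => v 0 = false ∧ visitsS1 v + e.toNat = k ∧
      ascents v + (if v (Fin.last n) = false ∧ e = true then 1 else 0) = j)]
  apply congrArg
  apply Finset.filter_congr
  intro w _
  have hsnoc : (Fin.snoc (fun i => w (Fin.castSucc i)) (w (Fin.last (n+1))) : Fin (n+2) → Bool) = w := by
    funext i
    induction i using Fin.lastCases with
    | last => rw [Fin.snoc_last]
    | cast i' => rw [Fin.snoc_castSucc]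
  have h0 : (fun i : Fin (n+1) => w (Fin.castSucc i)) 0 = w 0 := congrArg w Fin.castSucc_zero
  constructor
  · rintro ⟨ha, hb, hc, hd⟩
    refine ⟨hb, by rw [h0]; exact ha, ?_, ?_⟩
    · rw [← hsnoc, hb, visits_snoc] at hc; exact hc
    · rw [← hsnoc, hb, ascents_snoc] at hd; exact hd
  · rintro ⟨hb, ha, hc, hd⟩
    refine ⟨by rw [← h0]; exact ha, hb, ?_, ?_⟩
    · rw [← hsnoc, hb, visits_snoc]; exact hc
    · rw [← hsnoc, hb, ascents_snoc]; exact hd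

lemma cnt_succ_false' (n k j : ℕ) : cnt (n+1) k j false = cnt n k j true + cnt n k j false := by
  rw [cnt_succ, cnt, cnt]
  have h1 : (Finset.univ.filter fun v : Fin (n+1) → Bool =>
      v 0 = false ∧ v (Fin.last n) = true ∧ visitsS1 v = k ∧ ascents v = j)
      = (Finset.univ.filter (fun v : Fin (n+1) → Bool =>
          v 0 = false ∧ visitsS1 v + (false : Bool).toNat = k ∧
          ascents v + (if v (Fin.last n) = false ∧ (false : Bool) = true then 1 else 0) = j)).filter
        (fun v => v (Fin.last n) = true) := by
    rw [Finset.filter_filter]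
    apply Finset.filter_congr
    intro v _
    simp only [Bool.toNat_false, add_zero, Bool.false_eq_true, and_false, if_false, add_zero]
    tauto
  have h2 : (Finset.univ.filter fun v : Fin (n+1) → Bool =>
      v 0 = false ∧ v (Fin.last n) = false ∧ visitsS1 v = k ∧ ascents v = j)
      = (Finset.univ.filter (fun v : Fin (n+1) → Bool =>
          v 0 = false ∧ visitsS1 v + (false : Bool).toNat = k ∧
          ascents v + (if v (Fin.last n) = false ∧ (false : Bool) = true then 1 else 0) = j)).filter
        (fun v => ¬ (v (Fin.last n) = true)) := by
    rw [Finset.filter_filter]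
    apply Finset.filter_congr
    intro v _
    simp only [Bool.toNat_false, add_zero, Bool.false_eq_true, and_false, if_false, Bool.not_eq_true]
    tauto
  rw [h1, h2, Finset.card_filter_add_card_filter_not]

lemma cnt_succ_true' (n k j : ℕ) : cnt (n+1) (k+1) (j+1) true = cnt n k (j+1) true + cnt n k j false := by
  rw [cnt_succ, cnt, cnt]
  have h1 : (Finset.univ.filter fun v : Fin (n+1) → Bool =>
      v 0 = false ∧ v (Fin.last n) = true ∧ visitsS1 v = k ∧ ascents v = j+1)
      = (Finset.univ.filter (fun v : Fin (n+1) → Bool =>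
          v 0 = false ∧ visitsS1 v + (true : Bool).toNat = k+1 ∧
          ascents v + (if v (Fin.last n) = false ∧ (true : Bool) = true then 1 else 0) = j+1)).filter
        (fun v => v (Fin.last n) = true) := by
    rw [Finset.filter_filter]
    apply Finset.filter_congr
    intro v _
    simp only [Bool.toNat_true, and_true]
    constructor
    · rintro ⟨a, b, c, d⟩
      refine ⟨⟨a, by omega, ?_⟩, b⟩
      rw [if_neg (by simp [b])]
      omega
    · rintro ⟨⟨a, c, d⟩, b⟩
      rw [if_neg (by simp [b])] at d
      exact ⟨a, b, by omega, by omega⟩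
  have h2 : (Finset.univ.filter fun v : Fin (n+1) → Bool =>
      v 0 = false ∧ v (Fin.last n) = false ∧ visitsS1 v = k ∧ ascents v = j)
      = (Finset.univ.filter (fun v : Fin (n+1) → Bool =>
          v 0 = false ∧ visitsS1 v + (true : Bool).toNat = k+1 ∧
          ascents v + (if v (Fin.last n) = false ∧ (true : Bool) = true then 1 else 0) = j+1)).filter
        (fun v => ¬ (v (Fin.last n) = true)) := by
    rw [Finset.filter_filter]
    apply Finset.filter_congr
    intro v _
    simp only [Bool.toNat_true, and_true, Bool.not_eq_true]
    constructor
    · rintro ⟨a, b, c, d⟩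
      refine ⟨⟨a, by omega, ?_⟩, b⟩
      rw [if_pos b]
      omega
    · rintro ⟨⟨a, c, d⟩, b⟩
      rw [if_pos b] at d
      exact ⟨a, b, by omega, by omega⟩
  rw [h1, h2, Finset.card_filter_add_card_filter_not]

lemma cnt_succ_true_j0 (n k : ℕ) : cnt (n+1) (k+1) 0 true = cnt n k 0 true := by
  rw [cnt_succ, cnt]
  apply Finset.card_bij' (fun v _ => v) (fun v _ => v) <;> try (intro v hv; rfl)
  · intro v hv
    simp only [Finset.mem_filter, Finset.mem_univ, true_and, Bool.toNat_true] at hv ⊢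
    obtain ⟨a, c, d⟩ := hv
    have hb : v (Fin.last n) = true := by
      by_contra hb
      rw [Bool.not_eq_true] at hb
      rw [if_pos (by simp [hb])] at d
      omega
    rw [if_neg (by simp [hb])] at d
    exact ⟨a, hb, by omega, by omega⟩
  · intro v hv
    simp only [Finset.mem_filter, Finset.mem_univ, true_and, Bool.toNat_true] at hv ⊢
    obtain ⟨a, b, c, d⟩ := hv
    refine ⟨a, by omega, ?_⟩
    rw [if_neg (by simp [b])]
    omega

lemma cnt_true_k0 (m j : ℕ) : cnt m 0 j true = 0 := by
  rw [cnt]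
  apply Finset.card_eq_zero.mpr
  apply Finset.filter_false_of_mem
  rintro w _ ⟨h1, h2, h3, h4⟩
  have : Fin.last m ∈ Finset.univ.filter fun i : Fin (m+1) => w i = true := by
    simp [h2]
  rw [visitsS1] at h3
  rw [Finset.card_eq_zero.mp h3] at this
  exact absurd this (Finset.notMem_empty _)

lemma cnt_zero_true (k j : ℕ) : cnt 0 k j true = 0 := by
  rw [cnt]
  apply Finset.card_eq_zero.mpr
  apply Finset.filter_false_of_mem
  rintro w _ ⟨h1, h2, _, _⟩
  have : Fin.last 0 = (0 : Fin 1) := rfl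
  rw [this, h1] at h2
  exact absurd h2 (by simp)

lemma cnt_zero_false (k j : ℕ) : cnt 0 k j false = if k = 0 ∧ j = 0 then 1 else 0 := by
  have hv : ∀ w : Fin 1 → Bool, w 0 = false → w = fun _ => false := by
    intro w h; funext i; rw [Subsingleton.elim i 0, h]
  have hvis : visitsS1 (fun _ : Fin 1 => false) = 0 := by simp [visitsS1]
  have hasc : ascents (fun _ : Fin 1 => false) = 0 := by
    rw [ascents]; rfl
  rw [cnt]
  by_cases h : k = 0 ∧ j = 0
  · obtain ⟨rfl, rfl⟩ := h
    rw [if_pos ⟨rfl, rfl⟩]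
    have : (Finset.univ.filter (fun w : Fin 1 → Bool =>
        w 0 = false ∧ w (Fin.last 0) = false ∧ visitsS1 w = 0 ∧ ascents w = 0)) = {fun _ => false} := by
      ext w
      simp only [Finset.mem_filter, Finset.mem_univ, true_and, Finset.mem_singleton]
      constructor
      · rintro ⟨h1, _, _, _⟩; exact hv w h1
      · rintro rfl
        exact ⟨rfl, rfl, hvis, hasc⟩
    rw [this, Finset.card_singleton]
  · rw [if_neg h]
    apply Finset.card_eq_zero.mpr
    apply Finset.filter_false_of_mem
    rintro w _ ⟨h1, _, h3, h4⟩
    rw [hv w h1] at h3 h4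
    rw [hvis] at h3
    rw [hasc] at h4
    exact h ⟨h3.symm, h4.symm⟩

def Ft (n k j : ℕ) : ℕ :=
  if 1 ≤ k ∧ k ≤ n ∧ 1 ≤ j then Nat.choose (k-1) (j-1) * Nat.choose (n-k) (j-1) else 0

def Ff (n k j : ℕ) : ℕ :=
  if k = 0 then (if j = 0 then 1 else 0)
  else if 1 ≤ j then Nat.choose (k-1) (j-1) * Nat.choose (n-k) j else 0

lemma Ft_rec (n k j : ℕ) : Ft (n+1) (k+1) (j+1) = Ft n k (j+1) + Ff n k j := by
  unfold Ft Ff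
  rcases k with _ | k' <;> rcases j with _ | j' <;> split_ifs <;>
    simp_all [Nat.choose_succ_succ, Nat.choose_zero_succ, Nat.succ_sub_succ, Nat.sub_zero]
  · ring
  · right; rw [Nat.sub_eq_zero_of_le (by omega)]; exact Nat.choose_zero_succ _

lemma Ff_rec (n k j : ℕ) : Ff (n+1) k j = Ft n k j + Ff n k j := by
  unfold Ft Ff
  rcases k with _ | k' <;> rcases j with _ | j' <;> split_ifs <;>
    simp_all [Nat.choose_succ_succ, Nat.choose_zero_succ, Nat.succ_sub_succ, Nat.sub_zero]
  · rw [show n - k' = (n - (k'+1)) + 1 by omega, Nat.choose_succ_succ, Nat.mul_add]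
  · right; have e1 : n - k' = 0 := by omega
    have e2 : n - (k'+1) = 0 := by omega
    simp [e1, e2]

lemma main_formula : ∀ n k j, cnt n k j true = Ft n k j ∧ cnt n k j false = Ff n k j := by
  intro n
  induction n with
  | zero =>
    intro k j
    constructor
    · rw [cnt_zero_true, Ft]
      rcases Nat.eq_zero_or_pos k with rfl | hk
      · simp
      · rw [if_neg (by omega)]
    · rw [cnt_zero_false, Ff]
      rcases Nat.eq_zero_or_pos k with rfl | hk
      · simp
      · rw [if_neg (show ¬ k = 0 by omega), if_neg (show ¬ (k = 0 ∧ j = 0) by omega)]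
        rcases j with _ | j'
        · rw [if_neg (by omega)]
        · rw [if_pos (by omega), show (0 : ℕ) - k = 0 by omega, Nat.choose_zero_succ,
            Nat.mul_zero]
  | succ n ih =>
    intro k j
    constructor
    · rcases k with _ | k'
      · rw [cnt_true_k0, Ft, if_neg (by omega)]
      · rcases j with _ | j'
        · rw [cnt_succ_true_j0, (ih k' 0).1, Ft, Ft, if_neg (by omega), if_neg (by omega)]
        · rw [cnt_succ_true', (ih k' (j'+1)).1, (ih k' j').2, Ft_rec]
    · rw [cnt_succ_false', (ih k j).1, (ih k j).2, Ff_rec]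


theorem stmt10 (N k j : ℕ) (hN : 2 ≤ N) (hk0 : 0 < k) (hkN : k < N) (hj : 1 ≤ j) :
    (Finset.univ.filter (fun w : Fin N → Bool =>
        w ⟨0, by omega⟩ = false ∧ w ⟨N - 1, by omega⟩ = true ∧
        visitsS1 w = k ∧ ascents w = j)).card =
    Nat.choose (k - 1) (j - 1) * Nat.choose (N - k - 1) (j - 1) := by
  obtain ⟨n, rfl⟩ : ∃ n, N = n + 1 := ⟨N - 1, by omega⟩
  have e0 : (⟨0, by omega⟩ : Fin (n+1)) = 0 := rfl
  have elast : (⟨n + 1 - 1, by omega⟩ : Fin (n+1)) = Fin.last n := rfl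
  have h2 : Ft n k j = (k-1).choose (j-1) * (n-k).choose (j-1) := by
    rw [Ft, if_pos ⟨hk0, by omega, hj⟩]
  rw [show n + 1 - k - 1 = n - k by omega, ← h2, ← (main_formula n k j).1, cnt]
  apply congrArg
  apply Finset.filter_congr
  intro w _
  rw [e0, elast]
end

section
/- (Part L of the proof of Theorem 1.) Let N ≥ 2 and 0 < k < N. Then the sum, over all paths w : Fin N → Bool with w(0) = false, w(N−1) = true, and exactly k visits to S1, of the weight of w equals ∑_{j=1}^{min(k, N−k)} C(k−1, j−1)·p11^{k−j}·p10^{j−1}·C(N−k−1, j−1)·p01^{j}·p00^{N−k−j}. -/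
open Finset

section Aux
variable (p00 p01 p10 p11 : ℝ)

lemma snoc_eval2 {N : ℕ} (w : Fin (N+1) → Bool) (b : Bool) (j : Fin (N+2)) (hj : j.val < N+1) :
    (Fin.snoc w b : Fin (N+2) → Bool) j = w ⟨j.val, hj⟩ := by
  exact @Fin.snoc_castSucc (N+1) (fun _ => Bool) b w ⟨j.val, hj⟩

lemma visits_snoc_s14 {N : ℕ} (w : Fin (N+1) → Bool) (b : Bool) :
    visitsS1 (Fin.snoc w b : Fin (N+2) → Bool) = visitsS1 w + (if b = true then 1 else 0) := by
  unfold visitsS1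
  rw [Finset.card_filter, Finset.card_filter, Fin.sum_univ_castSucc]
  simp [Fin.snoc_castSucc, Fin.snoc_last]

lemma weight_snoc {N : ℕ} (w : Fin (N+1) → Bool) (b : Bool) :
    pathWeight p00 p01 p10 p11 (Fin.snoc w b : Fin (N+2) → Bool) =
      pathWeight p00 p01 p10 p11 w * mcStep p00 p01 p10 p11 (w (Fin.last N)) b := by
  unfold pathWeight
  rw [show ∀ (f : Fin (N+2-1) → ℝ), ∏ i, f i = ∏ i : Fin (N+1), f i from fun f => rfl]
  rw [Fin.prod_univ_castSucc]
  congr 1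
  · apply Finset.prod_congr rfl
    intro i _
    rw [snoc_eval2 w b _ (show ((⟨(Fin.castSucc i).val, by omega⟩ : Fin (N+2))).val < N+1 by
          simp),
        snoc_eval2 w b _ (show ((⟨(Fin.castSucc i).val + 1, by omega⟩ : Fin (N+2))).val < N+1 by
          simp)]
    congr 1 <;> exact congrArg w (Fin.ext (by simp))
  · rw [snoc_eval2 w b _ (show ((⟨(Fin.last N).val, by omega⟩ : Fin (N+2))).val < N+1 by
          simp),
        show (⟨(Fin.last N).val + 1, by omega⟩ : Fin (N+2)) = Fin.last (N+1) from Fin.ext rfl,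
        Fin.snoc_last]

/-- Sum of weights of paths of length N+1 starting at false, ending at `c`, with k visits. -/
def Wsum (c : Bool) (N k : ℕ) : ℝ :=
  ∑ w ∈ Finset.univ.filter (fun w : Fin (N+1) → Bool =>
      w 0 = false ∧ w (Fin.last N) = c ∧ visitsS1 w = k),
    pathWeight p00 p01 p10 p11 w

lemma snoc_zero' {N : ℕ} (w : Fin (N+1) → Bool) (b : Bool) :
    (Fin.snoc w b : Fin (N+2) → Bool) 0 = w 0 :=
  snoc_eval2 w b 0 (by simp)

lemma Wsum_rec (c : Bool) (N k : ℕ) :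
    Wsum p00 p01 p10 p11 c (N+1) k =
      ∑ w : Fin (N+1) → Bool, ∑ b : Bool,
        (if w 0 = false ∧ b = c ∧ visitsS1 w + (if b = true then 1 else 0) = k then
          pathWeight p00 p01 p10 p11 w * mcStep p00 p01 p10 p11 (w (Fin.last N)) b else 0) := by
  rw [Wsum, Finset.sum_filter]
  rw [← Equiv.sum_comp (Fin.snocEquiv (fun _ : Fin (N+2) => Bool))
      (fun w' : Fin (N+2) → Bool => if w' 0 = false ∧ w' (Fin.last (N+1)) = c ∧ visitsS1 w' = k
        then pathWeight p00 p01 p10 p11 w' else 0)]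
  rw [Fintype.sum_prod_type_right]
  apply Finset.sum_congr rfl
  intro w _
  apply Finset.sum_congr rfl
  intro b _
  have he : (Fin.snocEquiv (fun _ : Fin (N+2) => Bool)) (b, w) = Fin.snoc w b := rfl
  rw [he, snoc_zero', Fin.snoc_last, visits_snoc_s14, weight_snoc]

lemma Wsum_true_succ (N k : ℕ) :
    Wsum p00 p01 p10 p11 true (N+1) (k+1) =
      p01 * Wsum p00 p01 p10 p11 false N k + p11 * Wsum p00 p01 p10 p11 true N k := by
  rw [Wsum_rec]
  have step : ∀ w : Fin (N+1) → Bool,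
      (∑ b : Bool, (if w 0 = false ∧ b = true ∧
            visitsS1 w + (if b = true then 1 else 0) = k+1 then
          pathWeight p00 p01 p10 p11 w * mcStep p00 p01 p10 p11 (w (Fin.last N)) b else 0))
      = (if w 0 = false ∧ w (Fin.last N) = false ∧ visitsS1 w = k then
            pathWeight p00 p01 p10 p11 w else 0) * p01
        + (if w 0 = false ∧ w (Fin.last N) = true ∧ visitsS1 w = k then
            pathWeight p00 p01 p10 p11 w else 0) * p11 := by
    intro w
    rw [Fintype.sum_bool]
    cases hl : w (Fin.last N) <;> simp [hl, mcStep] <;> split <;> simp_all <;> ring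
  rw [Finset.sum_congr rfl (fun w _ => step w), Finset.sum_add_distrib,
    ← Finset.sum_mul, ← Finset.sum_mul]
  rw [Wsum, Wsum, Finset.sum_filter, Finset.sum_filter]
  ring

lemma Wsum_false_succ (N k : ℕ) :
    Wsum p00 p01 p10 p11 false (N+1) k =
      p00 * Wsum p00 p01 p10 p11 false N k + p10 * Wsum p00 p01 p10 p11 true N k := by
  rw [Wsum_rec]
  have step : ∀ w : Fin (N+1) → Bool,
      (∑ b : Bool, (if w 0 = false ∧ b = false ∧
            visitsS1 w + (if b = true then 1 else 0) = k then
          pathWeight p00 p01 p10 p11 w * mcStep p00 p01 p10 p11 (w (Fin.last N)) b else 0))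
      = (if w 0 = false ∧ w (Fin.last N) = false ∧ visitsS1 w = k then
            pathWeight p00 p01 p10 p11 w else 0) * p00
        + (if w 0 = false ∧ w (Fin.last N) = true ∧ visitsS1 w = k then
            pathWeight p00 p01 p10 p11 w else 0) * p10 := by
    intro w
    rw [Fintype.sum_bool]
    cases hl : w (Fin.last N) <;> simp [hl, mcStep] <;> split <;> simp_all <;> ring
  rw [Finset.sum_congr rfl (fun w _ => step w), Finset.sum_add_distrib,
    ← Finset.sum_mul, ← Finset.sum_mul]
  rw [Wsum, Wsum, Finset.sum_filter, Finset.sum_filter]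
  ring

lemma Wsum_true_zero (N : ℕ) : Wsum p00 p01 p10 p11 true N 0 = 0 := by
  rw [Wsum]
  apply Finset.sum_eq_zero
  intro w hw
  simp only [Finset.mem_filter] at hw
  obtain ⟨-, h0, hl, hv⟩ := hw
  exfalso
  have : Fin.last N ∈ Finset.univ.filter fun i : Fin (N+1) => w i = true := by
    simp [hl]
  rw [visitsS1] at hv
  rw [Finset.card_eq_zero] at hv
  simp [hv] at this

lemma Wsum_base_false (k : ℕ) :
    Wsum p00 p01 p10 p11 false 0 k = if k = 0 then 1 else 0 := by
  rw [Wsum, Finset.sum_filter]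
  rw [← Equiv.sum_comp (Equiv.funUnique (Fin 1) Bool).symm]
  rw [Fintype.sum_bool]
  simp [Equiv.funUnique, visitsS1, pathWeight, Fin.last, eq_comm]

/-- Range-form polynomial for paths ending at true: k = a+1 visits, N-k = b+1. -/
def Fr (a b : ℕ) : ℝ :=
  ∑ i ∈ Finset.range (min a b + 1),
    (Nat.choose a i : ℝ) * p11^(a-i) * p10^i * (Nat.choose b i : ℝ) * p01^(i+1) * p00^(b-i)

/-- Range-form polynomial for paths ending at false: k = a+1 ≥ 1 visits, N-1-k = b. -/
def Gr (a b : ℕ) : ℝ :=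
  ∑ i ∈ Finset.range (min a b + 1),
    (Nat.choose a i : ℝ) * p11^(a-i) * p10^(i+1) * (Nat.choose b (i+1) : ℝ) * p01^(i+1) * p00^(b-1-i)

lemma Fr_ext (a b M : ℕ) (h : min a b + 1 ≤ M) :
    Fr p00 p01 p10 p11 a b =
    ∑ i ∈ Finset.range M,
      (Nat.choose a i : ℝ) * p11^(a-i) * p10^i * (Nat.choose b i : ℝ) * p01^(i+1) * p00^(b-i) := by
  rw [Fr]
  apply Finset.sum_subset
  · exact Finset.range_subset_range.2 h
  · intro i hi hni
    simp only [Finset.mem_range, not_lt] at hi hni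
    rcases le_or_gt i a with ha | ha
    · have hb : b < i := by omega
      simp [Nat.choose_eq_zero_of_lt hb]
    · simp [Nat.choose_eq_zero_of_lt ha]

lemma Gr_ext (a b M : ℕ) (h : min a b + 1 ≤ M) :
    Gr p00 p01 p10 p11 a b =
    ∑ i ∈ Finset.range M,
      (Nat.choose a i : ℝ) * p11^(a-i) * p10^(i+1) * (Nat.choose b (i+1) : ℝ) * p01^(i+1) * p00^(b-1-i) := by
  rw [Gr]
  apply Finset.sum_subset
  · exact Finset.range_subset_range.2 h
  · intro i hi hni
    simp only [Finset.mem_range, not_lt] at hi hni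
    rcases le_or_gt i a with ha | ha
    · have hb : b < i + 1 := by omega
      simp [Nat.choose_eq_zero_of_lt hb]
    · simp [Nat.choose_eq_zero_of_lt ha]

lemma Gr_zero_right (a : ℕ) : Gr p00 p01 p10 p11 a 0 = 0 := by
  rw [Gr]
  apply Finset.sum_eq_zero
  intro i _
  simp [Nat.choose_eq_zero_of_lt (show 0 < i + 1 by omega)]

lemma Fr_zero_left (b : ℕ) : Fr p00 p01 p10 p11 0 b = p01 * p00^b := by
  rw [Fr]
  simp [Nat.min_eq_left (Nat.zero_le b)]

lemma R2 (a b : ℕ) :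
    Gr p00 p01 p10 p11 a (b+1) =
      p00 * Gr p00 p01 p10 p11 a b + p10 * Fr p00 p01 p10 p11 a b := by
  rw [Gr_ext p00 p01 p10 p11 a (b+1) (a+b+2) (by omega),
      Gr_ext p00 p01 p10 p11 a b (a+b+2) (by omega),
      Fr_ext p00 p01 p10 p11 a b (a+b+2) (by omega),
      Finset.mul_sum, Finset.mul_sum, ← Finset.sum_add_distrib]
  apply Finset.sum_congr rfl
  intro i _
  have hp : (Nat.choose (b+1) (i+1) : ℝ) = Nat.choose b i + Nat.choose b (i+1) := by
    exact_mod_cast Nat.choose_succ_succ b i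
  have e1 : b + 1 - 1 - i = b - i := by omega
  rw [hp, e1]
  rcases lt_or_ge i b with hib | hib
  · have e2 : b - i = (b - 1 - i) + 1 := by omega
    rw [e2, pow_succ]
    ring
  · have : Nat.choose b (i+1) = 0 := Nat.choose_eq_zero_of_lt (by omega)
    rw [this]
    push_cast
    ring

lemma R1 (a b : ℕ) :
    Fr p00 p01 p10 p11 (a+1) b =
      p01 * Gr p00 p01 p10 p11 a b + p11 * Fr p00 p01 p10 p11 a b := by
  rw [Fr_ext p00 p01 p10 p11 (a+1) b (a+b+2+1) (by omega),
      Gr_ext p00 p01 p10 p11 a b (a+b+2) (by omega),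
      Fr_ext p00 p01 p10 p11 a b (a+b+2+1) (by omega),
      Finset.mul_sum, Finset.mul_sum]
  rw [Finset.sum_range_succ' (fun i =>
      (Nat.choose (a+1) i : ℝ) * p11^(a+1-i) * p10^i * (Nat.choose b i : ℝ) * p01^(i+1) * p00^(b-i)) (a+b+2)]
  rw [Finset.sum_range_succ' (fun i =>
      p11 * ((Nat.choose a i : ℝ) * p11^(a-i) * p10^i * (Nat.choose b i : ℝ) * p01^(i+1) * p00^(b-i))) (a+b+2)]
  have h0 : (Nat.choose (a+1) 0 : ℝ) * p11^(a+1-0) * p10^0 * (Nat.choose b 0 : ℝ) * p01^(0+1) * p00^(b-0)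
      = p11 * ((Nat.choose a 0 : ℝ) * p11^(a-0) * p10^0 * (Nat.choose b 0 : ℝ) * p01^(0+1) * p00^(b-0)) := by
    simp [pow_succ]
    ring
  have hsum : ∀ k ∈ Finset.range (a+b+2),
      (Nat.choose (a+1) (k+1) : ℝ) * p11^(a+1-(k+1)) * p10^(k+1) * (Nat.choose b (k+1) : ℝ) * p01^(k+1+1) * p00^(b-(k+1))
      = p01 * ((Nat.choose a k : ℝ) * p11^(a-k) * p10^(k+1) * (Nat.choose b (k+1) : ℝ) * p01^(k+1) * p00^(b-1-k))
        + p11 * ((Nat.choose a (k+1) : ℝ) * p11^(a-(k+1)) * p10^(k+1) * (Nat.choose b (k+1) : ℝ) * p01^(k+1+1) * p00^(b-(k+1))) := by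
    intro k _
    have hp : (Nat.choose (a+1) (k+1) : ℝ) = Nat.choose a k + Nat.choose a (k+1) := by
      exact_mod_cast Nat.choose_succ_succ a k
    have e1 : a + 1 - (k+1) = a - k := by omega
    have e2 : b - (k+1) = b - 1 - k := by omega
    rw [hp, e1, e2]
    rcases lt_or_ge k a with hka | hka
    · have e3 : a - k = (a - (k+1)) + 1 := by omega
      rw [e3, pow_succ]
      ring
    · have : Nat.choose a (k+1) = 0 := Nat.choose_eq_zero_of_lt (by omega)
      rw [this]
      push_cast
      ring
  rw [Finset.sum_congr rfl hsum, Finset.sum_add_distrib, h0]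
  ring

lemma Wsum_base_true (k : ℕ) : Wsum p00 p01 p10 p11 true 0 k = 0 := by
  rw [Wsum, Finset.sum_filter]
  rw [← Equiv.sum_comp (Equiv.funUnique (Fin 1) Bool).symm]
  rw [Fintype.sum_bool]
  simp [Equiv.funUnique, Fin.last]

def FF (L k : ℕ) : ℝ := if 1 ≤ k ∧ k ≤ L - 1 then Fr p00 p01 p10 p11 (k-1) (L-1-k) else 0
def GG (L k : ℕ) : ℝ := if k = 0 then p00^(L-1) else Gr p00 p01 p10 p11 (k-1) (L-1-k)

lemma main (N : ℕ) : ∀ k, Wsum p00 p01 p10 p11 true N k = FF p00 p01 p10 p11 (N+1) k ∧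
    Wsum p00 p01 p10 p11 false N k = GG p00 p01 p10 p11 (N+1) k := by
  induction N with
  | zero =>
    intro k
    constructor
    · rw [Wsum_base_true, FF, if_neg (by omega)]
    · rw [Wsum_base_false, GG]
      rcases Nat.eq_zero_or_pos k with rfl | hk
      · simp
      · rw [if_neg (by omega), if_neg (by omega)]
        have : 0 + 1 - 1 - k = 0 := by omega
        rw [this, Gr_zero_right]
  | succ N ih =>
    intro k
    constructor
    · rcases Nat.eq_zero_or_pos k with rfl | hk
      · rw [Wsum_true_zero, FF, if_neg (by omega)]
      · obtain ⟨k', rfl⟩ : ∃ k', k = k' + 1 := ⟨k - 1, by omega⟩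
        rw [Wsum_true_succ, (ih k').1, (ih k').2]
        rcases Nat.eq_zero_or_pos k' with rfl | hk'
        · rw [GG, if_pos rfl, FF, if_neg (by omega), FF,
            if_pos (by constructor <;> omega)]
          have e1 : N + 1 + 1 - 1 - (0 + 1) = N := by omega
          have e2 : N + 1 - 1 = N := by omega
          rw [e1, e2, show (0+1-1 : ℕ) = 0 from rfl, Fr_zero_left]
          ring
        · rcases le_or_gt k' N with hkN | hkN
          · obtain ⟨a, rfl⟩ : ∃ a, k' = a + 1 := ⟨k' - 1, by omega⟩
            obtain ⟨b, rfl⟩ : ∃ b, N = a + 1 + b := ⟨N - (a+1), by omega⟩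
            rw [FF, if_pos (by constructor <;> omega), FF, if_pos (by constructor <;> omega),
              GG, if_neg (by omega)]
            have e1 : a + 1 + b + 1 + 1 - 1 - (a + 1 + 1) = b := by omega
            have e2 : a + 1 + b + 1 - 1 - (a + 1) = b := by omega
            have e3 : a + 1 + 1 - 1 = a + 1 := by omega
            have e4 : a + 1 - 1 = a := by omega
            rw [e1, e2, e3, e4, R1]
          · rw [FF, if_neg (by omega), FF, if_neg (by omega), GG, if_neg (by omega)]
            have e1 : N + 1 - 1 - k' = 0 := by omega
            rw [e1, Gr_zero_right]
            ring
    · rw [Wsum_false_succ, (ih k).1, (ih k).2]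
      rcases Nat.eq_zero_or_pos k with rfl | hk
      · rw [GG, if_pos rfl, GG, if_pos rfl, FF, if_neg (by omega)]
        have e1 : N + 1 - 1 = N := rfl
        have e2 : N + 1 + 1 - 1 = N + 1 := rfl
        rw [e1, e2, pow_succ]
        ring
      · rcases le_or_gt k N with hkN | hkN
        · obtain ⟨a, rfl⟩ : ∃ a, k = a + 1 := ⟨k - 1, by omega⟩
          obtain ⟨b, rfl⟩ : ∃ b, N = a + 1 + b := ⟨N - (a+1), by omega⟩
          rw [GG, if_neg (by omega), GG, if_neg (by omega), FF, if_pos (by constructor <;> omega)]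
          have e1 : a + 1 + b + 1 + 1 - 1 - (a + 1) = b + 1 := by omega
          have e2 : a + 1 + b + 1 - 1 - (a + 1) = b := by omega
          have e4 : a + 1 - 1 = a := by omega
          rw [e1, e2, e4, R2]
        · rw [GG, if_neg (by omega), GG, if_neg (by omega), FF, if_neg (by omega)]
          have e1 : N + 1 - 1 - k = 0 := by omega
          have e2 : N + 1 + 1 - 1 - k = 0 := by omega
          rw [e1, e2, Gr_zero_right]
          ring

end Aux

theorem stmt14 (p00 p01 p10 p11 : ℝ) (N k : ℕ) (hN : 2 ≤ N) (hk0 : 0 < k) (hkN : k < N) :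
    ∑ w ∈ Finset.univ.filter (fun w : Fin N → Bool =>
        w ⟨0, by omega⟩ = false ∧ w ⟨N - 1, by omega⟩ = true ∧ visitsS1 w = k),
      pathWeight p00 p01 p10 p11 w =
    ∑ j ∈ Finset.Icc 1 (min k (N - k)),
        (Nat.choose (k - 1) (j - 1) : ℝ) * p11 ^ (k - j) * p10 ^ (j - 1) *
          (Nat.choose (N - k - 1) (j - 1) : ℝ) * p01 ^ j * p00 ^ (N - k - j) := by
  obtain ⟨a, rfl⟩ : ∃ a, k = a + 1 := ⟨k - 1, by omega⟩
  obtain ⟨b, rfl⟩ : ∃ b, N = a + b + 2 := ⟨N - (a + 1) - 1, by omega⟩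
  have hL : (∑ w ∈ Finset.univ.filter (fun w : Fin (a+b+2) → Bool =>
        w ⟨0, by omega⟩ = false ∧ w ⟨a + b + 2 - 1, by omega⟩ = true ∧ visitsS1 w = a + 1),
      pathWeight p00 p01 p10 p11 w) = Wsum p00 p01 p10 p11 true (a+b+1) (a+1) := rfl
  rw [hL, (main p00 p01 p10 p11 (a+b+1) (a+1)).1, FF,
    if_pos (by constructor <;> omega)]
  have e0 : a + b + 1 + 1 - 1 - (a + 1) = b := by omega
  have e0' : a + 1 - 1 = a := by omega
  rw [e0, e0']
  have e1 : a + b + 2 - (a + 1) = b + 1 := by omega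
  rw [e1]
  have e2 : b + 1 - 1 = b := rfl
  rw [e2]
  rw [Nat.succ_min_succ, ← Finset.Ico_add_one_right_eq_Icc, Finset.sum_Ico_eq_sum_range]
  have e3 : min a b + 1 + 1 - 1 = min a b + 1 := rfl
  rw [e3, Fr]
  apply Finset.sum_congr rfl
  intro i _
  have f1 : 1 + i - 1 = i := by omega
  have f2 : a + 1 - (1 + i) = a - i := by omega
  have f3 : b + 1 - (1 + i) = b - i := by omega
  have f4 : 1 + i = i + 1 := by omega
  rw [f1, f2, f3, f4]
end
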